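/- For all positive integers k and n, the volume (Lebesgue measure) of the set V_{k,n} = {(x_0, x_1, …, x_{nk}) ∈ ℝ^{nk+1} : 0 < x_0 < x_1 < ⋯ < x_{nk}, and x_{jk} < j for each j = 1, …, n} equals n^{nk} / (nk+1)!. -/

import Mathlib

open Nat MeasureTheory Finset
open scoped ENNReal

namespace Stmt6Aux

variable {N : ℕ}

open scoped Classical in
/-- number of coordinates below threshold `t` -/
noncomputable def cnt (t : ℝ) (x : Fin N → ℝ) : ℕ := (Finset.univ.filter (fun i => x i < t)).card

lemma cnt_eq_sum (t : ℝ) (x : Fin N → ℝ) :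
    cnt t x = ∑ i, if x i < t then 1 else 0 := by
  classical
  rw [cnt, Finset.card_filter]

lemma measurable_cnt (t : ℝ) : Measurable (fun x : Fin N → ℝ => cnt t x) := by
  simp only [cnt_eq_sum]
  exact Finset.measurable_sum _ fun i _ =>
    Measurable.ite (measurableSet_lt (measurable_pi_apply i) measurable_const)
      measurable_const measurable_const

lemma measurableSet_le_cnt (a : ℕ) (t : ℝ) : MeasurableSet {x : Fin N → ℝ | a ≤ cnt t x} :=
  (measurable_cnt t) (measurableSet_Ici : MeasurableSet (Set.Ici a))

lemma cnt_comp_perm (t : ℝ) (x : Fin N → ℝ) (σ : Equiv.Perm (Fin N)) :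
    cnt t (x ∘ σ) = cnt t x := by
  simp only [cnt_eq_sum]
  exact Fintype.sum_equiv σ _ _ (fun i => rfl)

lemma cnt_of_nonpos {t : ℝ} (x : Fin N → ℝ) (hx : ∀ i, 0 ≤ x i) (ht : t ≤ 0) : cnt t x = 0 := by
  simp only [cnt, Finset.card_eq_zero]
  refine Finset.filter_false_of_mem fun i _ => ?_
  have := hx i; simp only [not_lt]; linarith

open scoped Classical in
lemma cnt_of_all_lt {t : ℝ} (x : Fin N → ℝ) (hx : ∀ i, x i < t) : cnt t x = N := by
  rw [cnt, Finset.filter_true_of_mem fun i _ => hx i, Finset.card_univ, Fintype.card_fin]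

lemma cnt_mono (x : Fin N → ℝ) {t t' : ℝ} (h : t ≤ t') : cnt t x ≤ cnt t' x := by
  classical
  refine Finset.card_le_card fun i hi => ?_
  rw [Finset.mem_filter] at hi ⊢
  exact ⟨hi.1, lt_of_lt_of_le hi.2 h⟩

/-- a null set : coordinates `i` and `j` agree -/
lemma null_eq_coord {i j : Fin N} (hij : i ≠ j) : volume {x : Fin N → ℝ | x i = x j} = 0 := by
  have : {x : Fin N → ℝ | x i = x j}
      = (LinearMap.ker ((LinearMap.proj i : (Fin N → ℝ) →ₗ[ℝ] ℝ) - LinearMap.proj j) :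
        Submodule ℝ (Fin N → ℝ)) := by
    ext x
    simp [LinearMap.mem_ker, sub_eq_zero, eq_comm]
  rw [this]
  refine Measure.addHaar_submodule _ _ ?_
  intro h
  have h1 : (Pi.single i 1 : Fin N → ℝ) ∈ (⊤ : Submodule ℝ (Fin N → ℝ)) := trivial
  rw [← h, LinearMap.mem_ker] at h1
  simp [Pi.single_apply, hij.symm, hij] at h1

lemma null_coord_zero (i : Fin N) : volume {x : Fin N → ℝ | x i = 0} = 0 := by
  have : {x : Fin N → ℝ | x i = 0}
      = (LinearMap.ker (LinearMap.proj i : (Fin N → ℝ) →ₗ[ℝ] ℝ) : Submodule ℝ (Fin N → ℝ)) := by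
    ext x; simp [LinearMap.mem_ker]
  rw [this]
  refine Measure.addHaar_submodule _ _ ?_
  intro h
  have h1 : (Pi.single i 1 : Fin N → ℝ) ∈ (⊤ : Submodule ℝ (Fin N → ℝ)) := trivial
  rw [← h, LinearMap.mem_ker] at h1
  simp [Pi.single_apply] at h1

lemma measurePreserving_comp_perm (σ : Equiv.Perm (Fin N)) :
    MeasurePreserving (fun x : Fin N → ℝ => x ∘ σ) volume volume := by
  refine ⟨measurable_pi_iff.mpr fun i => measurable_pi_apply (σ i), ?_⟩
  conv_rhs => rw [volume_pi]
  refine (Measure.pi_eq fun s hs => ?_).symm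
  rw [show (fun x : Fin N → ℝ => x ∘ σ) = (fun x i => x (σ i)) from rfl,
    Measure.map_apply (measurable_pi_iff.mpr fun i => measurable_pi_apply (σ i))
    (MeasurableSet.univ_pi hs)]
  have : (fun x : Fin N → ℝ => fun i => x (σ i)) ⁻¹' (Set.univ.pi s) = Set.univ.pi (fun i => s (σ.symm i)) := by
    ext x
    simp only [Set.mem_preimage, Set.mem_univ_pi, Function.comp_apply]
    exact ⟨fun h i => by simpa using h (σ.symm i), fun h i => by simpa using h (σ i)⟩
  rw [this, volume_pi_pi]
  exact σ.symm.prod_comp fun i => volume (s i)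

lemma measurableSet_strictMono : MeasurableSet {x : Fin N → ℝ | StrictMono x} := by
  have : {x : Fin N → ℝ | StrictMono x} = ⋂ (i : Fin N) (j : Fin N) (_ : i < j), {x | x i < x j} := by
    ext x
    simp only [Set.mem_setOf_eq, Set.mem_iInter]
    exact ⟨fun h i j hij => h hij, fun h a b hab => h a b hab⟩
  rw [this]
  exact MeasurableSet.iInter fun i => MeasurableSet.iInter fun j => MeasurableSet.iInter fun _ =>
    measurableSet_lt (measurable_pi_apply i) (measurable_pi_apply j)

/-- exactly one strictly-monotone re-ordering for injective tuples -/
lemma exists_unique_sort {x : Fin N → ℝ} (hx : Function.Injective x) :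
    ∃! σ : Equiv.Perm (Fin N), StrictMono (x ∘ σ) := by
  refine ⟨Tuple.sort x, ?_, ?_⟩
  · exact (Tuple.monotone_sort x).strictMono_of_injective (hx.comp (Tuple.sort x).injective)
  · intro τ hτ
    have h := Tuple.unique_monotone hτ.monotone (Tuple.monotone_sort x)
    ext i
    exact congrArg Fin.val (hx (congrFun h i))

lemma perm_decomp {S : Set (Fin N → ℝ)} (hS : MeasurableSet S)
    (hsymm : ∀ σ : Equiv.Perm (Fin N), (fun x => x ∘ σ) ⁻¹' S = S) :
    volume S = N ! * volume (S ∩ {x | StrictMono x}) := by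
  classical
  set SM : Set (Fin N → ℝ) := {x | StrictMono x} with hSM
  have hvol : ∀ σ : Equiv.Perm (Fin N),
      volume (S ∩ {x | StrictMono (x ∘ σ)}) = volume (S ∩ SM) := by
    intro σ
    have hpre : (fun x : Fin N → ℝ => x ∘ σ) ⁻¹' (S ∩ SM) = S ∩ {x | StrictMono (x ∘ σ)} := by
      rw [Set.preimage_inter, hsymm]
      rfl
    rw [← hpre]
    exact (measurePreserving_comp_perm σ).measure_preimage
      (hS.inter measurableSet_strictMono).nullMeasurableSet
  have hm : ∀ σ : Equiv.Perm (Fin N), MeasurableSet (S ∩ {x | StrictMono (x ∘ σ)}) := by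
    intro σ
    refine hS.inter ?_
    have : {x : Fin N → ℝ | StrictMono (x ∘ σ)} = (fun x : Fin N → ℝ => x ∘ σ) ⁻¹' SM := rfl
    rw [this]
    exact (measurePreserving_comp_perm σ).measurable measurableSet_strictMono
  have hdisj : Pairwise fun σ τ : Equiv.Perm (Fin N) =>
      Disjoint (S ∩ {x | StrictMono (x ∘ σ)}) (S ∩ {x | StrictMono (x ∘ τ)}) := by
    intro σ τ hστ
    rw [Set.disjoint_left]
    rintro x ⟨-, hxσ⟩ ⟨-, hxτ⟩
    have hinj : Function.Injective x := by
      have : Function.Injective (x ∘ σ) := hxσ.injective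
      intro a b hab
      have := this.comp σ.symm.injective
      have hab2 : (x ∘ σ) (σ.symm a) = (x ∘ σ) (σ.symm b) := by
        simpa [Function.comp] using hab
      have := hxσ.injective hab2
      simpa using congrArg σ this
    obtain ⟨u, -, hu⟩ := exists_unique_sort hinj
    exact hστ ((hu σ hxσ).trans (hu τ hxτ).symm)
  have hcover : S ⊆ (⋃ σ : Equiv.Perm (Fin N), S ∩ {x | StrictMono (x ∘ σ)}) ∪
      (⋃ (i : Fin N) (j : Fin N) (_ : i ≠ j), {x | x i = x j}) := by
    intro x hx
    by_cases hinj : Function.Injective x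
    · obtain ⟨σ, hσ, -⟩ := exists_unique_sort hinj
      exact Or.inl (Set.mem_iUnion.mpr ⟨σ, hx, hσ⟩)
    · right
      simp only [Function.Injective] at hinj
      push_neg at hinj
      obtain ⟨i, j, hij, hne⟩ := hinj
      exact Set.mem_iUnion.mpr ⟨i, Set.mem_iUnion.mpr ⟨j, Set.mem_iUnion.mpr ⟨hne, hij⟩⟩⟩
  have hnull : volume (⋃ (i : Fin N) (j : Fin N) (_ : i ≠ j), {x : Fin N → ℝ | x i = x j}) = 0 := by
    refine measure_iUnion_null fun i => measure_iUnion_null fun j => measure_iUnion_null fun hij =>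
      null_eq_coord hij
  have hUion : volume (⋃ σ : Equiv.Perm (Fin N), S ∩ {x | StrictMono (x ∘ σ)})
      = ∑ σ : Equiv.Perm (Fin N), volume (S ∩ {x | StrictMono (x ∘ σ)}) := by
    rw [measure_iUnion hdisj hm, tsum_fintype]
  have h1 : volume S ≤ N ! * volume (S ∩ SM) := by
    calc volume S ≤ volume ((⋃ σ : Equiv.Perm (Fin N), S ∩ {x | StrictMono (x ∘ σ)}) ∪
        (⋃ (i : Fin N) (j : Fin N) (_ : i ≠ j), {x : Fin N → ℝ | x i = x j})) := measure_mono hcover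
      _ ≤ volume (⋃ σ : Equiv.Perm (Fin N), S ∩ {x | StrictMono (x ∘ σ)}) +
          volume (⋃ (i : Fin N) (j : Fin N) (_ : i ≠ j), {x : Fin N → ℝ | x i = x j}) :=
        measure_union_le _ _
      _ = ∑ σ : Equiv.Perm (Fin N), volume (S ∩ {x | StrictMono (x ∘ σ)}) := by
          rw [hnull, add_zero, hUion]
      _ = N ! * volume (S ∩ SM) := by
          simp only [hvol, Finset.sum_const, Finset.card_univ, Fintype.card_perm,
            Fintype.card_fin, nsmul_eq_mul, Nat.cast_id]
  have h2 : N ! * volume (S ∩ SM) ≤ volume S := by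
    calc (N ! : ℝ≥0∞) * volume (S ∩ SM)
        = ∑ σ : Equiv.Perm (Fin N), volume (S ∩ {x | StrictMono (x ∘ σ)}) := by
          simp only [hvol, Finset.sum_const, Finset.card_univ, Fintype.card_perm,
            Fintype.card_fin, nsmul_eq_mul, Nat.cast_id]
      _ = volume (⋃ σ : Equiv.Perm (Fin N), S ∩ {x | StrictMono (x ∘ σ)}) := hUion.symm
      _ ≤ volume S := measure_mono (Set.iUnion_subset fun σ => Set.inter_subset_left)
  exact le_antisymm h1 h2

/-- the discrete cycle lemma -/
lemma cycle_lemma {n : ℕ} (hn : 0 < n) (s : ℕ → ℤ) (hs : ∀ t, s (t + n) = s t + 1) :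
    ∃! r, r < n ∧ ∀ j, 1 ≤ j → j ≤ n → s r < s (r + j) := by
  classical
  have hne : ((Finset.range n).image s).Nonempty :=
    ⟨s 0, Finset.mem_image_of_mem s (Finset.mem_range.mpr hn)⟩
  set M := ((Finset.range n).image s).min' hne with hM
  have hRne : ((Finset.range n).filter (fun t => s t = M)).Nonempty := by
    obtain ⟨t, ht, hst⟩ := Finset.mem_image.mp (Finset.min'_mem _ hne)
    exact ⟨t, Finset.mem_filter.mpr ⟨ht, hst⟩⟩
  set r := ((Finset.range n).filter (fun t => s t = M)).max' hRne with hr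
  have hrmem := Finset.max'_mem _ hRne
  have hrn : r < n := Finset.mem_range.mp (Finset.mem_filter.mp hrmem).1
  have hrM : s r = M := (Finset.mem_filter.mp hrmem).2
  have hmin : ∀ t, t < n → M ≤ s t := fun t ht =>
    Finset.min'_le _ _ (Finset.mem_image_of_mem s (Finset.mem_range.mpr ht))
  have hmax : ∀ t, t < n → s t = M → t ≤ r := fun t ht h =>
    Finset.le_max' _ _ (Finset.mem_filter.mpr ⟨Finset.mem_range.mpr ht, h⟩)
  have key : ∀ j, 1 ≤ j → j ≤ n → s r < s (r + j) := by
    intro j h1 hjn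
    by_cases h : r + j < n
    · rcases lt_or_eq_of_le (hmin _ h) with hlt | heq
      · rw [hrM]; exact hlt
      · exfalso; have := hmax _ h heq.symm; omega
    · have heq : s (r + j) = s (r + j - n) + 1 := by
        rw [← hs (r + j - n)]
        congr 1
        omega
      have h2 := hmin (r + j - n) (by omega)
      rw [heq, hrM]
      omega
  have uniq : ∀ a b, a < n → b < n → (∀ j, 1 ≤ j → j ≤ n → s a < s (a + j)) →
      (∀ j, 1 ≤ j → j ≤ n → s b < s (b + j)) → a < b → False := by
    intro a b han hbn hka hkb hab
    have h1 : s a < s b := by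
      have := hka (b - a) (by omega) (by omega)
      rwa [show a + (b - a) = b by omega] at this
    have h2 : s b < s (a + n) := by
      have := hkb (a + n - b) (by omega) (by omega)
      rwa [show b + (a + n - b) = a + n by omega] at this
    rw [hs a] at h2
    omega
  refine ⟨r, ⟨hrn, key⟩, ?_⟩
  rintro r' ⟨hr'n, hkey'⟩
  rcases lt_trichotomy r' r with h | h | h
  · exact absurd (uniq r' r hr'n hrn hkey' key h) not_false
  · exact h
  · exact absurd (uniq r r' hrn hr'n key hkey' h) not_false

/-- the rotation-by-`c` map on `[0,n)` -/
noncomputable def shf (n c : ℕ) (t : ℝ) : ℝ := if t < (n:ℝ) - c then t + c else t + c - n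

lemma measurable_shf (n c : ℕ) : Measurable (shf n c) :=
  Measurable.ite (measurableSet_lt measurable_id measurable_const)
    (measurable_id.add_const _) ((measurable_id.add_const _).sub_const _)

lemma shf_maps {n c : ℕ} (hc : c < n) {t : ℝ} (ht : t ∈ Set.Ico (0:ℝ) n) :
    shf n c t ∈ Set.Ico (0:ℝ) n := by
  have hc' : (c:ℝ) < n := by exact_mod_cast hc
  have hc0 : (0:ℝ) ≤ c := Nat.cast_nonneg c
  obtain ⟨ht0, htn⟩ := ht
  rw [shf]
  split_ifs with h
  · constructor <;> [linarith; linarith]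
  · push_neg at h
    constructor <;> [linarith; linarith]

lemma shf_measurePreserving {n c : ℕ} (hc : c < n) :
    MeasurePreserving (shf n c) (volume.restrict (Set.Ico (0:ℝ) n))
      (volume.restrict (Set.Ico (0:ℝ) n)) := by
  have hc' : (c:ℝ) < n := by exact_mod_cast hc
  have hc0 : (0:ℝ) ≤ c := Nat.cast_nonneg c
  refine ⟨measurable_shf n c, ?_⟩
  refine Measure.ext fun A hA => ?_
  rw [Measure.map_apply (measurable_shf n c) hA, Measure.restrict_apply ((measurable_shf n c) hA),
    Measure.restrict_apply hA]
  have hsplit : shf n c ⁻¹' A ∩ Set.Ico (0:ℝ) n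
      = ((fun t => t + (c:ℝ)) ⁻¹' (A ∩ Set.Ico (c:ℝ) n)) ∪
        ((fun t => t + ((c:ℝ) - n)) ⁻¹' (A ∩ Set.Ico (0:ℝ) c)) := by
    ext t
    simp only [Set.mem_inter_iff, Set.mem_preimage, Set.mem_Ico, Set.mem_union, shf]
    split_ifs with h
    · constructor
      · rintro ⟨hA1, h0, hn⟩
        exact Or.inl ⟨hA1, by linarith, by linarith⟩
      · rintro (⟨hA1, h1, h2⟩ | ⟨hA1, h1, h2⟩) <;> [skip; skip]
        · exact ⟨hA1, by linarith, by linarith⟩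
        · exfalso; linarith
    · push_neg at h
      constructor
      · rintro ⟨hA1, h0, hn⟩
        exact Or.inr ⟨by simpa [sub_eq_add_neg, add_comm, add_left_comm, add_assoc] using hA1,
          by linarith, by linarith⟩
      · rintro (⟨hA1, h1, h2⟩ | ⟨hA1, h1, h2⟩)
        · exfalso; linarith
        · refine ⟨by simpa [sub_eq_add_neg, add_comm, add_left_comm, add_assoc] using hA1,
            by linarith, by linarith⟩
  rw [hsplit]
  have hd : Disjoint ((fun t => t + (c:ℝ)) ⁻¹' (A ∩ Set.Ico (c:ℝ) n))
      ((fun t => t + ((c:ℝ) - n)) ⁻¹' (A ∩ Set.Ico (0:ℝ) c)) := by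
    rw [Set.disjoint_left]
    rintro t ⟨-, h1, h2⟩ ⟨-, h3, h4⟩
    simp only [Set.mem_Ico] at *
    linarith
  have hm1 : MeasurableSet ((fun t : ℝ => t + (c:ℝ)) ⁻¹' (A ∩ Set.Ico (c:ℝ) n)) :=
    (measurable_id.add_const _) (hA.inter measurableSet_Ico)
  have hm2 : MeasurableSet ((fun t : ℝ => t + ((c:ℝ) - n)) ⁻¹' (A ∩ Set.Ico (0:ℝ) c)) :=
    (measurable_id.add_const _) (hA.inter measurableSet_Ico)
  rw [measure_union hd hm2]
  rw [measure_preimage_add_right volume (c:ℝ) _, measure_preimage_add_right volume ((c:ℝ) - n) _]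
  rw [← measure_union ?_ (hA.inter measurableSet_Ico)]
  · congr 1
    rw [← Set.inter_union_distrib_left]
    congr 1
    rw [Set.union_comm, Set.Ico_union_Ico_eq_Ico hc0 (le_of_lt hc')]
  · rw [Set.disjoint_left]
    rintro t ⟨-, h1, h2⟩ ⟨-, h3, h4⟩
    linarith

lemma restrict_cube (n N : ℕ) :
    Measure.pi (fun _ : Fin N => volume.restrict (Set.Ico (0:ℝ) n))
      = (volume : Measure (Fin N → ℝ)).restrict (Set.univ.pi fun _ => Set.Ico (0:ℝ) n) := by
  refine Measure.pi_eq fun s hs => ?_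
  rw [Measure.restrict_apply (MeasurableSet.univ_pi hs), ← Set.pi_inter_distrib, volume_pi_pi]
  exact Finset.prod_congr rfl fun i _ => (Measure.restrict_apply (hs i)).symm

lemma shift_cube_measure {n N : ℕ} (hc : {c : ℕ // c < n}) (E : Set (Fin N → ℝ))
    (hE : MeasurableSet E) (hEsub : E ⊆ Set.univ.pi fun _ => Set.Ico (0:ℝ) n) :
    volume ((fun x : Fin N → ℝ => fun i => shf n hc.1 (x i)) ⁻¹' E ∩
      (Set.univ.pi fun _ => Set.Ico (0:ℝ) n)) = volume E := by
  obtain ⟨c, hcn⟩ := hc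
  have hpres : MeasurePreserving (fun x : Fin N → ℝ => fun i => shf n c (x i))
      ((volume : Measure (Fin N → ℝ)).restrict (Set.univ.pi fun _ => Set.Ico (0:ℝ) n))
      ((volume : Measure (Fin N → ℝ)).restrict (Set.univ.pi fun _ => Set.Ico (0:ℝ) n)) := by
    rw [← restrict_cube]
    exact measurePreserving_pi _ _ (fun _ => shf_measurePreserving hcn)
  have := hpres.measure_preimage hE.nullMeasurableSet
  rwa [Measure.restrict_apply (hpres.measurable hE), Measure.restrict_apply hE,
    Set.inter_eq_self_of_subset_left hEsub] at this

/-- the main count-condition set -/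
def Ecnt (n k N : ℕ) : Set (Fin N → ℝ) :=
  (Set.univ.pi fun _ => Set.Ico (0:ℝ) n) ∩
    {x | ∀ j : ℕ, 1 ≤ j → j ≤ n → j * k + 1 ≤ cnt (j:ℝ) x}

lemma measurableSet_Ecnt (n k N : ℕ) : MeasurableSet (Ecnt n k N) := by
  refine (MeasurableSet.univ_pi fun _ => measurableSet_Ico).inter ?_
  have : {x : Fin N → ℝ | ∀ j : ℕ, 1 ≤ j → j ≤ n → j * k + 1 ≤ cnt (j:ℝ) x}
      = ⋂ (j : ℕ) (_ : 1 ≤ j) (_ : j ≤ n), {x | j * k + 1 ≤ cnt (j:ℝ) x} := by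
    ext x; simp
  rw [this]
  exact MeasurableSet.iInter fun j => MeasurableSet.iInter fun _ => MeasurableSet.iInter fun _ =>
    measurableSet_le_cnt _ _

lemma Ecnt_subset_cube (n k N : ℕ) :
    Ecnt n k N ⊆ Set.univ.pi fun _ => Set.Ico (0:ℝ) n := Set.inter_subset_left

lemma exists_unique_shift {n k N : ℕ} (hn : 0 < n) (hN : N = n * k + 1)
    {x : Fin N → ℝ} (hx : ∀ i, x i ∈ Set.Ico (0:ℝ) n) :
    ∃! c : Fin n, (fun i => shf n c.1 (x i)) ∈ Ecnt n k N := by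
  classical
  set G : ℕ → ℕ := fun t => cnt (t:ℝ) x with hGdef
  have hG0 : G 0 = 0 := by
    have := cnt_of_nonpos x (fun i => (hx i).1) (le_refl (0:ℝ))
    simp only [hGdef, Nat.cast_zero]
    exact this
  have hGtop : ∀ t : ℕ, n ≤ t → G t = N := fun t ht =>
    cnt_of_all_lt x fun i => lt_of_lt_of_le (hx i).2 (by exact_mod_cast ht)
  have hNZ : (N:ℤ) = (n:ℤ) * k + 1 := by rw [hN]; push_cast; ring
  set s : ℕ → ℤ := fun t => (N:ℤ) * (((t / n : ℕ)) : ℤ) + (G (t % n) : ℤ) - (k:ℤ) * (t:ℤ)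
    with hsdef
  have hs : ∀ t, s (t + n) = s t + 1 := by
    intro t
    simp only [hsdef]
    rw [Nat.add_div_right t hn, Nat.add_mod_right]
    rw [hNZ]
    push_cast
    ring
  set Gext : ℕ → ℤ := fun t => if t ≤ n then (G t : ℤ) else (N:ℤ) + G (t - n) with hGext
  have hsG : ∀ t : ℕ, 1 ≤ t → t ≤ 2 * n → s t = Gext t - (k:ℤ) * t := by
    intro t h1 h2
    rcases Nat.lt_or_ge t n with h | h
    · simp only [hsdef, hGext]
      rw [Nat.div_eq_of_lt h, Nat.mod_eq_of_lt h, if_pos h.le]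
      push_cast
      ring
    · have ht' : t = (t - n) + n := by omega
      set u := t - n with hu
      rcases Nat.lt_or_ge u n with h3 | h3
      · rcases Nat.eq_zero_or_pos u with h4 | h4
        · have ht'' : t = n := by omega
          simp only [hsdef, hGext, ht'']
          rw [Nat.div_self hn, Nat.mod_self, hG0, if_pos (le_refl n), hGtop n le_rfl]
          push_cast
          ring
        · simp only [hsdef, hGext, ht']
          rw [Nat.add_div_right u hn, Nat.add_mod_right, Nat.div_eq_of_lt h3,
            Nat.mod_eq_of_lt h3, if_neg (by omega : ¬ u + n ≤ n),
            show u + n - n = u by omega]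
          push_cast
          ring
      · have h5 : u = n := by omega
        have ht'' : t = n + n := by omega
        simp only [hsdef, hGext, ht'']
        rw [Nat.add_div_right n hn, Nat.add_mod_right, Nat.div_self hn, Nat.mod_self, hG0,
          if_neg (by omega : ¬ n + n ≤ n), show n + n - n = n by omega, hGtop n le_rfl]
        push_cast
        ring
  -- the bridge between membership after shifting by `c` and the walk condition
  have hbridge : ∀ c : ℕ, c < n →
      ((fun i => shf n c (x i)) ∈ Ecnt n k N ↔
        ∀ j, 1 ≤ j → j ≤ n → s (n - c) < s ((n - c) + j)) := by
    intro c hc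
    have hcR : (c : ℝ) < n := by exact_mod_cast hc
    have hc0R : (0:ℝ) ≤ c := Nat.cast_nonneg c
    set y : Fin N → ℝ := fun i => shf n c (x i) with hy
    have hycube : y ∈ Set.univ.pi fun _ : Fin N => Set.Ico (0:ℝ) n :=
      fun i _ => shf_maps hc (hx i)
    have hmem : y ∈ Ecnt n k N ↔ ∀ j : ℕ, 1 ≤ j → j ≤ n → j * k + 1 ≤ cnt (j:ℝ) y := by
      rw [Ecnt, Set.mem_inter_iff, and_iff_right hycube]
      rfl
    rw [hmem]
    refine forall_congr' fun j => ?_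
    refine imp_congr_right fun h1 => imp_congr_right fun hjn => ?_
    have hjR : (j:ℝ) ≤ n := by exact_mod_cast hjn
    set r : ℕ := n - c with hrdef
    have hr1 : 1 ≤ r := by omega
    have hrn : r ≤ n := by omega
    -- master pointwise counting identity
    have master : cnt (j:ℝ) y + cnt ((n:ℝ) - c) x
        = cnt ((j:ℝ) - c) x + cnt ((n:ℝ) - c + j) x := by
      simp only [cnt_eq_sum, ← Finset.sum_add_distrib]
      refine Finset.sum_congr rfl fun i _ => ?_
      have h2 := (hx i).1
      have h3 := (hx i).2
      simp only [hy, shf]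
      split_ifs <;> first | rfl | (exfalso; linarith)
    have hb1 : cnt ((n:ℝ) - c) x = G r := by
      rw [hGdef]
      congr 1
      rw [hrdef, Nat.cast_sub hc.le]
    have hb2 : cnt ((n:ℝ) - c + j) x = G (r + j) := by
      rw [hGdef]
      congr 1
      rw [hrdef]
      push_cast [Nat.cast_sub hc.le]
      ring
    have hmain : (cnt (j:ℝ) y : ℤ) = Gext (r + j) - Gext r := by
      rcases Nat.lt_or_ge c j with hcj | hcj
      · -- j > c
        have hb3 : cnt ((j:ℝ) - c) x = G (j - c) := by
          rw [hGdef]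
          congr 1
          rw [Nat.cast_sub hcj.le]
        have hb4 : G (r + j) = N := hGtop _ (by omega)
        have he1 : Gext (r + j) = (N:ℤ) + G (j - c) := by
          rw [hGext]
          simp only
          rw [if_neg (by omega), show r + j - n = j - c by omega]
        have he2 : Gext r = (G r : ℤ) := by rw [hGext]; simp only [if_pos hrn]
        rw [he1, he2]
        have := master
        rw [hb1, hb2, hb3, hb4] at this
        omega
      · -- j ≤ c
        have hb3 : cnt ((j:ℝ) - c) x = 0 := by
          refine cnt_of_nonpos x (fun i => (hx i).1) ?_
          have : (j:ℝ) ≤ c := by exact_mod_cast hcj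
          linarith
        have he1 : Gext (r + j) = (G (r + j) : ℤ) := by
          rw [hGext]; simp only [if_pos (by omega : r + j ≤ n)]
        have he2 : Gext r = (G r : ℤ) := by rw [hGext]; simp only [if_pos hrn]
        rw [he1, he2]
        have := master
        rw [hb1, hb2, hb3] at this
        omega
    have hsr : s r = Gext r - k * r := hsG r hr1 (by omega)
    have hsrj : s (r + j) = Gext (r + j) - k * (r + j) := hsG (r + j) (by omega) (by omega)
    constructor
    · intro h
      have h' : (j * k + 1 : ℤ) ≤ (cnt (j:ℝ) y : ℤ) := by exact_mod_cast h
      rw [hmain] at h'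
      rw [hsr, hsrj]
      push_cast
      push_cast at h'
      linarith [h']
    · intro h
      rw [hsr, hsrj] at h
      have h' : (j * k + 1 : ℤ) ≤ (cnt (j:ℝ) y : ℤ) := by
        rw [hmain]
        push_cast at h ⊢
        linarith [h]
      exact_mod_cast h'
  -- apply the cycle lemma
  obtain ⟨r₀, ⟨hr₀n, hr₀⟩, hr₀uniq⟩ := cycle_lemma hn s hs
  have hP0n : (∀ j, 1 ≤ j → j ≤ n → s n < s (n + j)) ↔
      (∀ j, 1 ≤ j → j ≤ n → s 0 < s (0 + j)) := by
    have hsn : s n = s 0 + 1 := by simpa using hs 0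
    refine forall_congr' fun j => imp_congr_right fun h1 => imp_congr_right fun h2 => ?_
    have : s (n + j) = s (0 + j) + 1 := by
      rw [show n + j = j + n by omega, hs j]
      simp [Nat.zero_add]
    rw [this, hsn]
    omega
  -- translate between c and r
  have hcr : ∀ c : ℕ, c < n → ((∀ j, 1 ≤ j → j ≤ n → s (n - c) < s ((n - c) + j)) ↔
      (∀ j, 1 ≤ j → j ≤ n → s ((n - c) % n) < s (((n - c) % n) + j))) := by
    intro c hc
    rcases Nat.eq_zero_or_pos c with h | h
    · subst h
      simp only [Nat.sub_zero, Nat.mod_self]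
      exact hP0n
    · rw [Nat.mod_eq_of_lt (by omega)]
  refine ⟨⟨(n - r₀) % n, Nat.mod_lt _ hn⟩, ?_, ?_⟩
  · show (fun i => shf n ((n - r₀) % n) (x i)) ∈ Ecnt n k N
    rw [hbridge _ (Nat.mod_lt _ hn), hcr _ (Nat.mod_lt _ hn)]
    have : (n - (n - r₀) % n) % n = r₀ := by
      rcases Nat.eq_zero_or_pos r₀ with h | h
      · subst h
        simp [Nat.mod_self]
      · have h1 : (n - r₀) % n = n - r₀ := Nat.mod_eq_of_lt (by omega)
        rw [h1, Nat.sub_sub_self hr₀n.le, Nat.mod_eq_of_lt hr₀n]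
    rw [this]
    exact hr₀
  · rintro ⟨c, hc⟩ hcmem
    have hcmem' : (fun i => shf n c (x i)) ∈ Ecnt n k N := hcmem
    rw [hbridge c hc, hcr c hc] at hcmem'
    have := hr₀uniq ((n - c) % n) ⟨Nat.mod_lt _ hn, hcmem'⟩
    have hcc : c = (n - r₀) % n := by
      rcases Nat.eq_zero_or_pos c with h | h
      · subst h
        simp only [Nat.sub_zero, Nat.mod_self] at this
        rw [← this]
        simp [Nat.mod_self]
      · have h1 : (n - c) % n = n - c := Nat.mod_eq_of_lt (by omega)
        rw [h1] at this
        rw [← this, Nat.sub_sub_self hc.le, Nat.mod_eq_of_lt hc]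
    exact Fin.ext hcc
end Stmt6Aux

open Stmt6Aux in
theorem stmt6 (n k : ℕ) (hn : 0 < n) (hk : 0 < k) :
    volume {x : Fin (n * k + 1) → ℝ |
        0 < x ⟨0, Nat.succ_pos _⟩ ∧
        (∀ i j : Fin (n * k + 1), i < j → x i < x j) ∧
        (∀ i : Fin (n * k + 1), ∀ j : ℕ, 1 ≤ j → j ≤ n → (i : ℕ) = j * k → x i < j)} =
      ENNReal.ofReal ((n : ℝ) ^ (n * k) / ((n * k + 1)! : ℝ)) := by
  classical
  set N := n * k + 1 with hN
  set V : Set (Fin N → ℝ) := {x : Fin N → ℝ |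
        0 < x ⟨0, Nat.succ_pos _⟩ ∧
        (∀ i j : Fin N, i < j → x i < x j) ∧
        (∀ i : Fin N, ∀ j : ℕ, 1 ≤ j → j ≤ n → (i : ℕ) = j * k → x i < j)} with hV
  set SM : Set (Fin N → ℝ) := {x | StrictMono x} with hSM
  set E : Set (Fin N → ℝ) := Ecnt n k N with hE
  set cube : Set (Fin N → ℝ) := Set.univ.pi fun _ => Set.Ico (0:ℝ) n with hcube
  have hNnk : n * k < N := by omega
  -- Step A : volume V = volume (E ∩ SM)
  have hVsub : V ⊆ E ∩ SM := by
    rintro x ⟨h0, hmono', hbd⟩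
    have hmono : StrictMono x := fun i j h => hmono' i j h
    have hzero_le : ∀ i : Fin N, (⟨0, Nat.succ_pos _⟩ : Fin N) ≤ i := fun i => by
      simp [Fin.le_def]
    have hlast_lt : ∀ i : Fin N, i ≤ (⟨n * k, hNnk⟩ : Fin N) := fun i => by
      simp only [Fin.le_def]
      omega
    have hxlast : x ⟨n * k, hNnk⟩ < (n:ℝ) := hbd ⟨n * k, hNnk⟩ n (by omega) le_rfl rfl
    have hcube_mem : ∀ i, x i ∈ Set.Ico (0:ℝ) n := by
      intro i
      constructor
      · exact le_of_lt (lt_of_lt_of_le h0 (hmono.monotone (hzero_le i)))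
      · exact lt_of_le_of_lt (hmono.monotone (hlast_lt i)) hxlast
    refine ⟨⟨fun i _ => hcube_mem i, ?_⟩, hmono⟩
    intro j hj1 hjn
    have hjk : j * k < N := by
      have : j * k ≤ n * k := Nat.mul_le_mul_right k hjn
      omega
    have hxjk : x ⟨j * k, hjk⟩ < (j:ℝ) := hbd ⟨j * k, hjk⟩ j hj1 hjn rfl
    have hsub : (Finset.univ.filter fun i : Fin N => (i : ℕ) ≤ j * k)
        ⊆ Finset.univ.filter fun i : Fin N => x i < (j:ℝ) := by
      intro i hi
      simp only [Finset.mem_filter, Finset.mem_univ, true_and] at hi ⊢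
      refine lt_of_le_of_lt ?_ hxjk
      exact hmono.monotone (by simp only [Fin.le_def]; exact hi)
    have hcard : j * k + 1 ≤ (Finset.univ.filter fun i : Fin N => (i : ℕ) ≤ j * k).card := by
      have := Finset.card_le_card_of_injOn
        (f := fun i : Fin (j * k + 1) => (⟨(i : ℕ), lt_of_lt_of_le i.isLt (by omega)⟩ : Fin N))
        (s := Finset.univ) (t := Finset.univ.filter fun i : Fin N => (i : ℕ) ≤ j * k)
        (by intro a _; simp only [Finset.mem_coe, Finset.mem_filter, Finset.mem_univ, true_and]; omega)
        (by intro a _ b _ hab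
            apply Fin.val_injective
            simpa using congrArg Fin.val hab)
      simpa using this
    calc j * k + 1 ≤ _ := hcard
      _ ≤ _ := Finset.card_le_card hsub
      _ = cnt (j:ℝ) x := by rw [cnt]
  have hsub2 : E ∩ SM ⊆ V ∪ {x : Fin N → ℝ | x ⟨0, Nat.succ_pos _⟩ = 0} := by
    rintro x ⟨hxE, hxSM⟩
    have hx0 : (0:ℝ) ≤ x ⟨0, Nat.succ_pos _⟩ := (hxE.1 _ (Set.mem_univ _)).1
    rcases eq_or_lt_of_le hx0 with h | h
    · exact Or.inr h.symm
    · refine Or.inl ⟨h, fun i j hij => hxSM hij, ?_⟩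
      intro i j hj1 hjn hi
      by_contra hcon
      push_neg at hcon
      have hcnt : j * k + 1 ≤ cnt (j:ℝ) x := hxE.2 j hj1 hjn
      have hsubf : (Finset.univ.filter fun i' : Fin N => x i' < (j:ℝ))
          ⊆ Finset.univ.filter fun i' : Fin N => (i' : ℕ) < j * k := by
        intro i' hi'
        simp only [Finset.mem_filter, Finset.mem_univ, true_and] at hi' ⊢
        have : x i' < x i := lt_of_lt_of_le hi' hcon
        have := hxSM.lt_iff_lt.mp this
        rw [Fin.lt_def] at this
        omega
      have hcard2 : (Finset.univ.filter fun i' : Fin N => (i' : ℕ) < j * k).card ≤ j * k := by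
        have := Finset.card_le_card_of_injOn
          (f := fun i' : Fin N => (i' : ℕ))
          (s := Finset.univ.filter fun i' : Fin N => (i' : ℕ) < j * k)
          (t := Finset.range (j * k))
          (by intro a ha; simp only [Finset.mem_coe, Finset.mem_filter, Finset.mem_univ, true_and] at ha
              exact Finset.mem_range.mpr ha)
          (by intro a _ b _ hab; exact Fin.ext hab)
        simpa using this
      have : cnt (j:ℝ) x ≤ j * k := by
        rw [cnt]
        exact le_trans (Finset.card_le_card hsubf) hcard2
      omega
  have hA : volume V = volume (E ∩ SM) := by
    refine le_antisymm (measure_mono hVsub) ?_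
    calc volume (E ∩ SM) ≤ volume (V ∪ {x : Fin N → ℝ | x ⟨0, Nat.succ_pos _⟩ = 0}) :=
        measure_mono hsub2
      _ ≤ volume V + volume {x : Fin N → ℝ | x ⟨0, Nat.succ_pos _⟩ = 0} := measure_union_le _ _
      _ = volume V := by rw [null_coord_zero, add_zero]
  -- Step B : volume E = N! * volume (E ∩ SM)
  have hEsymm : ∀ σ : Equiv.Perm (Fin N), (fun x : Fin N → ℝ => x ∘ σ) ⁻¹' E = E := by
    intro σ
    ext x
    simp only [Set.mem_preimage, hE, Ecnt, Set.mem_inter_iff, Set.mem_setOf_eq, Set.mem_pi,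
      Set.mem_univ, forall_true_left, Function.comp_apply]
    constructor
    · rintro ⟨h1, h2⟩
      refine ⟨fun i => by simpa using h1 (σ.symm i), fun j hj1 hjn => ?_⟩
      rw [← cnt_comp_perm (j:ℝ) x σ]
      exact h2 j hj1 hjn
    · rintro ⟨h1, h2⟩
      exact ⟨fun i => h1 (σ i), fun j hj1 hjn => by
        rw [cnt_comp_perm]; exact h2 j hj1 hjn⟩
  have hB : volume E = (N ! : ℝ≥0∞) * volume (E ∩ SM) :=
    perm_decomp (measurableSet_Ecnt n k N) hEsymm
  -- Step C : volume cube = n * volume E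
  have hEsubcube : E ⊆ cube := Ecnt_subset_cube n k N
  have hEM : MeasurableSet E := measurableSet_Ecnt n k N
  have hcubeM : MeasurableSet cube := MeasurableSet.univ_pi fun _ => measurableSet_Ico
  have hTmeas : ∀ c : ℕ, Measurable (fun x : Fin N → ℝ => fun i => shf n c (x i)) :=
    fun c => measurable_pi_iff.mpr fun i => (measurable_shf n c).comp (measurable_pi_apply i)
  have hpart : cube = ⋃ c : Fin n,
      ((fun x : Fin N → ℝ => fun i => shf n c.1 (x i)) ⁻¹' E ∩ cube) := by
    ext x
    constructor
    · intro hx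
      obtain ⟨c, hc, -⟩ := exists_unique_shift hn hN (fun i => hx i (Set.mem_univ i))
      exact Set.mem_iUnion.mpr ⟨c, hc, hx⟩
    · intro hx
      obtain ⟨c, -, hc2⟩ := Set.mem_iUnion.mp hx
      exact hc2
  have hdisjC : Pairwise (Function.onFun Disjoint fun c : Fin n =>
      ((fun x : Fin N → ℝ => fun i => shf n c.1 (x i)) ⁻¹' E ∩ cube)) := by
    intro c c' hcc'
    rw [Function.onFun, Set.disjoint_left]
    rintro x ⟨hx1, hx2⟩ ⟨hx3, -⟩
    obtain ⟨c₀, -, huniq⟩ := exists_unique_shift hn hN (fun i => hx2 i (Set.mem_univ i))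
    exact hcc' ((huniq c hx1).trans (huniq c' hx3).symm)
  have hC : volume cube = (n : ℝ≥0∞) * volume E := by
    rw [hpart, measure_iUnion hdisjC fun c => ((hTmeas c.1) hEM).inter hcubeM, tsum_fintype]
    have : ∀ c : Fin n,
        volume ((fun x : Fin N → ℝ => fun i => shf n c.1 (x i)) ⁻¹' E ∩ cube) = volume E :=
      fun c => shift_cube_measure ⟨c.1, c.2⟩ E hEM hEsubcube
    rw [Finset.sum_congr rfl fun c _ => this c]
    simp [Finset.card_univ]
  -- volume of the cube
  have hD : volume cube = (n : ℝ≥0∞) ^ N := by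
    rw [hcube, volume_pi_pi]
    simp only [Real.volume_Ico, sub_zero, ENNReal.ofReal_natCast]
    rw [Finset.prod_const, Finset.card_univ, Fintype.card_fin]
  -- put everything together
  have hn0 : (n : ℝ≥0∞) ≠ 0 := Nat.cast_ne_zero.mpr hn.ne'
  have hnt : (n : ℝ≥0∞) ≠ ⊤ := ENNReal.natCast_ne_top _
  have hf0 : (N ! : ℝ≥0∞) ≠ 0 := Nat.cast_ne_zero.mpr (Nat.factorial_ne_zero N)
  have hft : (N ! : ℝ≥0∞) ≠ ⊤ := ENNReal.natCast_ne_top _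
  have hkey : (n : ℝ≥0∞) ^ N = (n : ℝ≥0∞) * ((N ! : ℝ≥0∞) * volume V) := by
    calc (n : ℝ≥0∞) ^ N = volume cube := hD.symm
      _ = (n : ℝ≥0∞) * volume E := hC
      _ = (n : ℝ≥0∞) * ((N ! : ℝ≥0∞) * volume (E ∩ SM)) := by rw [hB]
      _ = (n : ℝ≥0∞) * ((N ! : ℝ≥0∞) * volume V) := by rw [hA]
  have hVval : volume V = (n : ℝ≥0∞) ^ N / ((n : ℝ≥0∞) * (N ! : ℝ≥0∞)) := by
    rw [ENNReal.eq_div_iff (mul_ne_zero hn0 hf0) (ENNReal.mul_ne_top hnt hft)]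
    rw [hkey]
    ring
  rw [hVval]
  have hfpos : (0:ℝ) < ((N !:ℕ) : ℝ) := by
    exact_mod_cast Nat.factorial_pos N
  rw [ENNReal.ofReal_div_of_pos hfpos, ENNReal.ofReal_pow (Nat.cast_nonneg n),
    ENNReal.ofReal_natCast, ENNReal.ofReal_natCast]
  rw [hN, pow_succ, mul_comm ((n:ℝ≥0∞) ^ (n*k)) (n:ℝ≥0∞),
    ENNReal.mul_div_mul_left _ _ hn0 hnt]
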